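/- Euler characteristic of a smooth complete intersection: Let $Y$ be a smooth complex projective variety of dimension $N+1$ with an ample line bundle $\mathcal{O}(1)$, $\eta = c_1(\mathcal{O}(1))$. If $X \subseteq Y$ is a smooth complete intersection of hypersurfaces of degrees $d_1, \dots, d_r$ (i.e. of divisors in $|\mathcal{O}(d_i)|$), then $\chi(X) = \left(\prod_{i=1}^r d_i\right) \sum_{i=0}^{k} Q_i(d_1,\dots,d_r) \int_Y \eta^{N+1-i} c_i(T_Y)$, where $k = N+1-r = \dim X$ and $Q_i(d_1,\dots,d_r)$ is the coefficient of $t^{k-i}$ in $\prod_{j=1}^r (1+d_j t)^{-1}$. -/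

import Mathlib

open PowerSeries

/-- If `η ^ n = 0`, then `aeval η` only depends on coefficients below `n`. -/
lemma aux_aeval_congr {A : Type*} [CommRing A] [Algebra ℝ A] (η : A) (n : ℕ)
    (hη : η ^ n = 0) {p q : Polynomial ℝ} (h : ∀ j, j < n → p.coeff j = q.coeff j) :
    Polynomial.aeval η p = Polynomial.aeval η q := by
  have key : ∀ pp : Polynomial ℝ, Polynomial.aeval η pp
      = ∑ i ∈ Finset.range n, pp.coeff i • η ^ i := by
    intro pp
    rw [Polynomial.aeval_eq_sum_range' (n := max n (pp.natDegree + 1))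
      (lt_of_lt_of_le (Nat.lt_succ_self _) (le_max_right _ _)) η]
    symm
    apply Finset.sum_subset (Finset.range_subset_range.mpr (le_max_left _ _))
    intro i hi hni
    have hin : n ≤ i := le_of_not_gt (fun hl => hni (Finset.mem_range.mpr hl))
    have hzero : η ^ i = 0 := by
      rw [show i = n + (i - n) by omega, pow_add, hη, zero_mul]
    rw [hzero, smul_zero]
  rw [key p, key q]
  exact Finset.sum_congr rfl fun i hi => by rw [h i (Finset.mem_range.mp hi)]

/-- Evaluation of truncations at a nilpotent element is multiplicative. -/
lemma aux_phi_mul {A : Type*} [CommRing A] [Algebra ℝ A] (η : A) (n : ℕ)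
    (hη : η ^ n = 0) (f g : PowerSeries ℝ) :
    Polynomial.aeval η (trunc n (f * g)) =
      Polynomial.aeval η (trunc n f) * Polynomial.aeval η (trunc n g) := by
  rw [← map_mul]
  apply aux_aeval_congr η n hη
  intro j hj
  rw [PowerSeries.coeff_trunc, if_pos hj, ← Polynomial.coeff_coe, Polynomial.coe_mul]
  exact PowerSeries.coeff_mul_eq_coeff_trunc_mul_trunc f g hj

theorem stmt17 {R S : Type*} [CommRing R] [Algebra ℝ R] [CommRing S] [Algebra ℝ S]
    (N r k : ℕ) (hr : 1 ≤ r) (hrN : r ≤ N + 1) (hk : k = N + 1 - r)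
    (d : Fin r → ℕ) (hd : ∀ j, 0 < d j)
    (η : R) (hη : η ^ (N + 2) = 0)
    (cY : ℕ → R)
    (intY : R →ₗ[ℝ] ℝ) (intX : S →ₗ[ℝ] ℝ)
    (jpull : R →ₐ[ℝ] S)
    (hgrade : ∀ m i : ℕ, m + i ≠ N + 1 → intY (η ^ m * cY i) = 0)
    (cTX : S)
    (hadj : cTX * jpull (∏ j : Fin r, (1 + algebraMap ℝ R (d j : ℝ) * η)) =
      jpull (∑ i ∈ Finset.range (N + 2), cY i))
    (hproj : ∀ a : R, intX (jpull a) = (∏ j : Fin r, (d j : ℝ)) * intY (η ^ r * a)) :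
    intX cTX = (∏ j : Fin r, (d j : ℝ)) *
      ∑ i ∈ Finset.range (k + 1),
        (PowerSeries.coeff (R := ℝ) (k - i)
            ((∏ j : Fin r, (1 + PowerSeries.C (R := ℝ) (d j : ℝ) * PowerSeries.X))⁻¹)) *
          intY (η ^ (N + 1 - i) * cY i) := by
  classical
  set n := N + 2 with hn
  set F : PowerSeries ℝ := ∏ j : Fin r, (1 + PowerSeries.C (R := ℝ) (d j : ℝ) * PowerSeries.X)
    with hF
  set G : PowerSeries ℝ := F⁻¹ with hG
  set q : ℕ → ℝ := fun m => PowerSeries.coeff (R := ℝ) m G with hq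
  set P : R := ∏ j : Fin r, (1 + algebraMap ℝ R (d j : ℝ) * η) with hP
  set c : R := ∑ i ∈ Finset.range n, cY i with hc
  -- F is invertible
  have hFc : PowerSeries.constantCoeff (R := ℝ) F ≠ 0 := by
    rw [hF, map_prod]
    simp
  have hGF : G * F = 1 := PowerSeries.inv_mul_cancel F hFc
  -- φ F = P
  set Binv : R := Polynomial.aeval η (trunc n G) with hB
  have hphiF : Polynomial.aeval η (trunc n F) = P := by
    have hFpoly : F = ((∏ j : Fin r, (1 + Polynomial.C (d j : ℝ) * Polynomial.X) :
        Polynomial ℝ) : PowerSeries ℝ) := by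
      rw [hF, ← Polynomial.coeToPowerSeries.ringHom_apply, map_prod]
      apply Finset.prod_congr rfl
      intro j _
      rw [Polynomial.coeToPowerSeries.ringHom_apply]
      push_cast [Polynomial.coe_add, Polynomial.coe_mul, Polynomial.coe_one,
        Polynomial.coe_C, Polynomial.coe_X]
      ring
    have h1 : Polynomial.aeval η (trunc n F) =
        Polynomial.aeval η (∏ j : Fin r, (1 + Polynomial.C (d j : ℝ) * Polynomial.X)) := by
      apply aux_aeval_congr η n hη
      intro j hj
      rw [PowerSeries.coeff_trunc, if_pos hj, hFpoly, Polynomial.coeff_coe]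
    rw [h1, map_prod, hP]
    apply Finset.prod_congr rfl
    intro j _
    simp
  have hBP : Binv * P = 1 := by
    rw [hB, ← hphiF, ← aux_phi_mul η n hη, hGF]
    have : trunc n (1 : PowerSeries ℝ) = 1 := PowerSeries.trunc_one (N + 1)
    rw [this, map_one]
  -- cTX = jpull (c * Binv)
  have hcTX : cTX = jpull (c * Binv) := by
    calc cTX = cTX * (jpull P * jpull Binv) := by
            rw [← map_mul, mul_comm P Binv, hBP, map_one, mul_one]
      _ = (cTX * jpull P) * jpull Binv := by ring
      _ = jpull c * jpull Binv := by rw [hadj]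
      _ = jpull (c * Binv) := by rw [map_mul]
  rw [hcTX, hproj]
  congr 1
  -- expand Binv
  have hBexp : Binv = ∑ m ∈ Finset.range n, q m • η ^ m := by
    rw [hB, Polynomial.aeval_eq_sum_range' (n := n)
      (PowerSeries.natDegree_trunc_lt G (N + 1)) η]
    apply Finset.sum_congr rfl
    intro m hm
    rw [PowerSeries.coeff_trunc, if_pos (Finset.mem_range.mp hm)]
  -- expand the integrand as a double sum
  have hexp : η ^ r * (c * Binv) =
      ∑ i ∈ Finset.range n, ∑ m ∈ Finset.range n, q m • (η ^ (r + m) * cY i) := by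
    rw [hBexp, hc, Finset.sum_mul, Finset.mul_sum]
    apply Finset.sum_congr rfl
    intro i _
    rw [Finset.mul_sum, Finset.mul_sum]
    apply Finset.sum_congr rfl
    intro m _
    rw [mul_smul_comm, mul_smul_comm]
    congr 1
    rw [pow_add]
    ring
  rw [hexp, map_sum]
  have hterm : ∀ i, intY (∑ m ∈ Finset.range n, q m • (η ^ (r + m) * cY i))
      = ∑ m ∈ Finset.range n, q m * intY (η ^ (r + m) * cY i) := by
    intro i
    rw [map_sum]
    exact Finset.sum_congr rfl fun m _ => by rw [map_smul]; rfl
  rw [Finset.sum_congr rfl fun i _ => hterm i]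
  -- restrict outer sum to range (k+1)
  rw [show (∑ i ∈ Finset.range n, ∑ m ∈ Finset.range n, q m * intY (η ^ (r + m) * cY i))
      = ∑ i ∈ Finset.range (k + 1), ∑ m ∈ Finset.range n, q m * intY (η ^ (r + m) * cY i) by
    symm
    apply Finset.sum_subset (Finset.range_subset_range.mpr (by omega))
    intro i _ hik
    have hik' : k + 1 ≤ i := le_of_not_gt (fun hl => hik (Finset.mem_range.mpr hl))
    apply Finset.sum_eq_zero
    intro m _
    rw [hgrade (r + m) i (by omega), mul_zero]]
  apply Finset.sum_congr rfl
  intro i hi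
  have hik : i ≤ k := Nat.lt_succ_iff.mp (Finset.mem_range.mp hi)
  rw [Finset.sum_eq_single_of_mem (k - i) (Finset.mem_range.mpr (by omega))]
  · rw [show r + (k - i) = N + 1 - i by omega]
  · intro m _ hm
    rw [hgrade (r + m) i (by omega), mul_zero]
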